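/- Soundness of the frame rule *D for data nodes: suppose u ∉ x⃗ and the variables v⃗ are disjoint from x⃗, and the entailment F₁ ⊢ ∃x⃗.(F₂ ∧ u = t ∧ v⃗ = w⃗) is valid. Then the entailment F₁ * (u ↦ v⃗) ⊢ ∃x⃗.(F₂ * (t ↦ w⃗)) is valid. -/

import Mathlib

/-- SL assertions as predicates on (stack, finite heap) models. -/
abbrev Assn (Var Val : Type) [DecidableEq Val] :=
  (Var → Val) → Finmap (fun _ : Val => List Val) → Prop

/-- Separating conjunction: the heap splits into two disjoint parts. -/
def star {Var Val : Type} [DecidableEq Val] (A B : Assn Var Val) : Assn Var Val :=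
  fun s h => ∃ h₁ h₂, h₁.Disjoint h₂ ∧ h = h₁ ∪ h₂ ∧ A s h₁ ∧ B s h₂

/-- Singleton heap predicate `u ↦ v⃗`: the domain is exactly `{s u}`,
storing the values of `v⃗`. -/
def ptsTo {Var Val : Type} [DecidableEq Val] (u : Var) (vs : List Var) : Assn Var Val :=
  fun s h => h = Finmap.singleton (s u) (vs.map s)

/-- Validity of an entailment `A ⊢ B`: every model of `A` is a model of `B`. -/
def valid {Var Val : Type} [DecidableEq Val] (A B : Assn Var Val) : Prop :=
  ∀ s h, A s h → B s h

/-- Existential quantification over a list of variables. -/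
def exs {Var Val : Type} [DecidableEq Val] [DecidableEq Var] :
    List Var → Assn Var Val → Assn Var Val
  | [], F => F
  | x :: xs, F => fun s h => ∃ v : Val, exs xs F (Function.update s x v) h

/-- Soundness of the frame rule `*D` for data nodes: if `u ∉ x⃗`, `v⃗` is
disjoint from `x⃗`, and `F₁ ⊢ ∃x⃗.(F₂ ∧ u = t ∧ v⃗ = w⃗)` is valid, then
`F₁ * (u ↦ v⃗) ⊢ ∃x⃗.(F₂ * (t ↦ w⃗))` is valid. -/

theorem starData_aux {Var Val : Type} [DecidableEq Val] [DecidableEq Var]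
    (F₂ : Assn Var Val) (u t : Var) (vs ws : List Var) :
    ∀ (xs : List Var), u ∉ xs → (∀ v ∈ vs, v ∉ xs) →
    ∀ (s : Var → Val) (h₁ : Finmap (fun _ : Val => List Val)),
      h₁.Disjoint (Finmap.singleton (s u) (vs.map s)) →
      exs xs (fun s h => F₂ s h ∧ s u = s t ∧ vs.map s = ws.map s) s h₁ →
      exs xs (star F₂ (ptsTo t ws)) s (h₁ ∪ Finmap.singleton (s u) (vs.map s)) := by
  intro xs
  induction xs with
  | nil =>
    intro _ _ s h₁ hd ⟨hF, he1, he2⟩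
    exact ⟨h₁, _, hd, rfl, hF, by simp [ptsTo, he1, he2]⟩
  | cons x xs ih =>
    intro hu hdisj s h₁ hd ⟨v, hv⟩
    refine ⟨v, ?_⟩
    have hux : u ≠ x := fun h => hu (h ▸ List.mem_cons_self (a := x) (l := xs))
    have h1 : (Function.update s x v) u = s u := Function.update_of_ne hux v s
    have h2 : vs.map (Function.update s x v) = vs.map s := by
      apply List.map_congr_left
      intro a ha
      have hax : a ≠ x := fun h => hdisj a ha (by rw [h]; exact List.mem_cons_self (a := x) (l := xs))
      exact Function.update_of_ne hax v s
    have := ih (fun h => hu (List.mem_cons_of_mem x h))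
      (fun a ha h => hdisj a ha (List.mem_cons_of_mem x h))
      (Function.update s x v) h₁ (by rw [h1, h2]; exact hd) hv
    rwa [h1, h2] at this

theorem starData_sound {Var Val : Type} [DecidableEq Val] [DecidableEq Var]
    (F₁ F₂ : Assn Var Val) (u t : Var) (vs ws xs : List Var)
    (hu : u ∉ xs) (hdisj : ∀ v ∈ vs, v ∉ xs)
    (hprem : valid F₁
      (exs xs (fun s h => F₂ s h ∧ s u = s t ∧ vs.map s = ws.map s))) :
    valid (star F₁ (ptsTo u vs)) (exs xs (star F₂ (ptsTo t ws))) := by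
  intro s h ⟨h₁, h₂, hd, heq, hF₁, hpt⟩
  subst heq
  rw [hpt] at hd ⊢
  exact starData_aux F₂ u t vs ws xs hu hdisj s h₁ hd (hprem s h₁ hF₁)
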